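/- The conditional bias vanishes if either model is correct: in the setting of the bias formula, if p̃(X)=p(X) almost surely or (m̃₁(X)=m₁(X) and m̃₀(X)=m₀(X)) almost surely, then the conditional expectation of the doubly robust score equals m₁(X)-m₀(X) almost surely. -/

import Mathlib

open MeasureTheory ProbabilityTheory Set

lemma condExp_mul_of_condIndepFun'
    {Ω : Type*} {m' mΩ : MeasurableSpace Ω} [StandardBorelSpace Ω] [Nonempty Ω]
    (hm' : m' ≤ mΩ)
    (μ : Measure Ω) [IsProbabilityMeasure μ]
    {Z D : Ω → ℝ} (hZm : Measurable Z) (hDm : Measurable D)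
    (hZ : Integrable Z μ) (hDb : ∀ ω, |D ω| ≤ 1)
    (h : CondIndepFun m' hm' Z D μ) :
    μ[fun ω => D ω * Z ω | m'] =ᵐ[μ] fun ω => (μ[D|m']) ω * (μ[Z|m']) ω := by
  set κ := condExpKernel μ m' with hκ
  -- a.e. ω, Z and D are independent under κ ω
  have hIndep : ∀ᵐ ω ∂μ, IndepFun Z D (κ ω) := by
    have h' := (Kernel.indepFun_iff_measure_inter_preimage_eq_mul.mp h)
    have h2 : ∀ᵐ ω ∂(μ.trim hm'), ∀ q r : ℚ,
        κ ω (Z ⁻¹' Set.Iio (q:ℝ) ∩ D ⁻¹' Set.Iio (r:ℝ))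
          = κ ω (Z ⁻¹' Set.Iio (q:ℝ)) * κ ω (D ⁻¹' Set.Iio (r:ℝ)) := by
      rw [ae_all_iff]
      intro q
      rw [ae_all_iff]
      intro r
      exact h' _ _ measurableSet_Iio measurableSet_Iio
    refine ae_of_ae_trim hm' (h2.mono fun ω hω => ?_)
    have hgen : (inferInstance : MeasurableSpace ℝ) = .generateFrom (⋃ a : ℚ, {Iio (a:ℝ)}) := by
      rw [← Real.borel_eq_generateFrom_Iio_rat]; exact BorelSpace.measurable_eq
    have hcomap : ∀ (f : Ω → ℝ), MeasurableSpace.comap f (inferInstance : MeasurableSpace ℝ)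
        = .generateFrom {s : Set Ω | ∃ t ∈ (⋃ a : ℚ, {Iio (a:ℝ)}), f ⁻¹' t = s} := by
      intro f
      rw [hgen, MeasurableSpace.comap_generateFrom]
      rfl
    exact IndepSets.indep (μ := κ ω) hZm.comap_le hDm.comap_le
      (Real.isPiSystem_Iio_rat.comap Z) (Real.isPiSystem_Iio_rat.comap D)
      (hcomap Z) (hcomap D)
      (by rintro _ _ ⟨s, hs, rfl⟩ ⟨t, ht, rfl⟩
          simp only [Set.mem_iUnion, Set.mem_singleton_iff] at hs ht
          obtain ⟨q, rfl⟩ := hs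
          obtain ⟨r, rfl⟩ := ht
          exact ae_of_all _ fun _ => hω q r)
  have hZae : ∀ᵐ ω ∂μ, Integrable Z (κ ω) := hZ.condExpKernel_ae
  have hDae : ∀ᵐ ω ∂μ, Integrable D (κ ω) := by
    refine Filter.Eventually.of_forall fun ω => ?_
    exact (integrable_const (1:ℝ)).mono' hDm.aestronglyMeasurable
      (Filter.Eventually.of_forall fun x => by simpa using hDb x)
  have hDZ : Integrable (fun ω => D ω * Z ω) μ := by
    have := hZ.bdd_mul hDm.aestronglyMeasurable (c := 1) (ae_of_all _ fun x => hDb x)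
    simpa using this
  have h1 := condExp_ae_eq_integral_condExpKernel hm' hDZ
  have h2 := condExp_ae_eq_integral_condExpKernel hm' hZ
  have hDi : Integrable D μ := (integrable_const (1:ℝ)).mono' hDm.aestronglyMeasurable
    (Filter.Eventually.of_forall fun x => by simpa using hDb x)
  have h3 := condExp_ae_eq_integral_condExpKernel hm' hDi
  filter_upwards [hIndep, hZae, hDae, h1, h2, h3] with ω hω hZω hDω e1 e2 e3
  rw [e1, e2, e3]
  have := hω.integral_mul_eq_mul_integral hZω.aestronglyMeasurable hDω.aestronglyMeasurable
  simp only [Pi.mul_apply] at this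
  rw [show (fun x => D x * Z x) = (fun x => Z x * D x) by ext x; ring]
  calc ∫ y, Z y * D y ∂ κ ω = (∫ y, Z y ∂κ ω) * ∫ y, D y ∂κ ω := this
    _ = (∫ y, D y ∂κ ω) * ∫ y, Z y ∂κ ω := by ring

theorem doubly_robust_bias_vanishes
    {Ω E : Type*} [MeasurableSpace Ω] [StandardBorelSpace Ω] [Nonempty Ω]
    [mE : MeasurableSpace E]
    (μ : Measure Ω) [IsProbabilityMeasure μ]
    (X : Ω → E) (hX : Measurable X)
    (D Y1 Y0 Y : Ω → ℝ)
    (hD : Measurable D) (hD01 : ∀ ω, D ω = 0 ∨ D ω = 1)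
    (hY1m : Measurable Y1) (hY0m : Measurable Y0)
    (hY1 : Integrable Y1 μ) (hY0 : Integrable Y0 μ)
    (hY : ∀ ω, Y ω = D ω * Y1 ω + (1 - D ω) * Y0 ω)
    (hUnconf : CondIndepFun (MeasurableSpace.comap X mE) hX.comap_le
      (fun ω => (Y1 ω, Y0 ω)) D μ)
    (pX : Ω → ℝ)
    (hpX : pX =ᵐ[μ] μ[D | MeasurableSpace.comap X mE])
    (ptilde : E → ℝ) (hptilde : Measurable ptilde)
    (ε : ℝ) (hε : 0 < ε) (hpb : ∀ x, ε ≤ ptilde x ∧ ptilde x ≤ 1 - ε)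
    (mtilde1 mtilde0 : E → ℝ)
    (hmt1 : Measurable mtilde1) (hmt0 : Measurable mtilde0)
    (hmt1i : Integrable (fun ω => mtilde1 (X ω)) μ)
    (hmt0i : Integrable (fun ω => mtilde0 (X ω)) μ)
    -- either the propensity score or the outcome regressions are correctly specified
    (hcorrect :
      ((fun ω => ptilde (X ω)) =ᵐ[μ] pX) ∨
      ((fun ω => mtilde1 (X ω)) =ᵐ[μ] μ[Y1 | MeasurableSpace.comap X mE] ∧
       (fun ω => mtilde0 (X ω)) =ᵐ[μ] μ[Y0 | MeasurableSpace.comap X mE])) :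
    μ[fun ω =>
        D ω * (Y ω - mtilde1 (X ω)) / ptilde (X ω)
          - (1 - D ω) * (Y ω - mtilde0 (X ω)) / (1 - ptilde (X ω))
          + mtilde1 (X ω) - mtilde0 (X ω)
      | MeasurableSpace.comap X mE]
      =ᵐ[μ] fun ω =>
        (μ[Y1 | MeasurableSpace.comap X mE]) ω - (μ[Y0 | MeasurableSpace.comap X mE]) ω := by
  have hm' : MeasurableSpace.comap X mE ≤ _ := hX.comap_le
  set m' := MeasurableSpace.comap X mE with hm'def
  have hXm' : Measurable[m'] X := fun s hs => ⟨s, hs, rfl⟩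
  have hpt0 : ∀ ω, ptilde (X ω) ≠ 0 := fun ω => ne_of_gt (lt_of_lt_of_le hε (hpb (X ω)).1)
  have hpt1 : ∀ ω, (1 : ℝ) - ptilde (X ω) ≠ 0 := fun ω => by
    have := (hpb (X ω)).2; intro hc; nlinarith
  have hDb : ∀ ω, |D ω| ≤ 1 := fun ω => by rcases hD01 ω with h | h <;> simp [h]
  set q1 : Ω → ℝ := fun ω => (ptilde (X ω))⁻¹ with hq1def
  set q0 : Ω → ℝ := fun ω => ((1 : ℝ) - ptilde (X ω))⁻¹ with hq0def
  set A : Ω → ℝ := fun ω => q1 ω * (D ω * (Y1 ω - mtilde1 (X ω))) with hAdef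
  set B : Ω → ℝ := fun ω => q0 ω * ((1 - D ω) * (Y0 ω - mtilde0 (X ω))) with hBdef
  -- rewrite the score pointwise
  have hf_eq : (fun ω =>
        D ω * (Y ω - mtilde1 (X ω)) / ptilde (X ω)
          - (1 - D ω) * (Y ω - mtilde0 (X ω)) / (1 - ptilde (X ω))
          + mtilde1 (X ω) - mtilde0 (X ω))
      = fun ω => (A ω - B ω) + (mtilde1 (X ω) - mtilde0 (X ω)) := by
    funext ω
    simp only [hAdef, hBdef, hq1def, hq0def]
    rcases hD01 ω with h | h <;>
      · rw [hY ω, h]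
        have h0 := hpt0 ω; have h1 := hpt1 ω
        field_simp
        ring
  rw [hf_eq]
  -- boundedness of q1, q0
  have hptpos : ∀ ω, 0 < ptilde (X ω) := fun ω => lt_of_lt_of_le hε (hpb (X ω)).1
  have h1ptpos : ∀ ω, (0:ℝ) < 1 - ptilde (X ω) := fun ω => by
    have := (hpb (X ω)).2; linarith
  have hq1b : ∀ ω, |q1 ω| ≤ ε⁻¹ := fun ω => by
    have he : q1 ω = (ptilde (X ω))⁻¹ := rfl
    rw [he, abs_of_pos (inv_pos.mpr (hptpos ω))]
    exact inv_anti₀ hε (hpb (X ω)).1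
  have hq0b : ∀ ω, |q0 ω| ≤ ε⁻¹ := fun ω => by
    have h2 := (hpb (X ω)).2
    have he : q0 ω = ((1:ℝ) - ptilde (X ω))⁻¹ := rfl
    rw [he, abs_of_pos (inv_pos.mpr (h1ptpos ω))]
    exact inv_anti₀ hε (by linarith)
  -- measurability
  have hq1m : Measurable[m'] q1 := (hptilde.comp hXm').inv
  have hq0m : Measurable[m'] q0 := (measurable_const.sub (hptilde.comp hXm')).inv
  have hmt1m' : Measurable[m'] fun ω => mtilde1 (X ω) := hmt1.comp hXm'
  have hmt0m' : Measurable[m'] fun ω => mtilde0 (X ω) := hmt0.comp hXm'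
  -- integrability
  have hDi : Integrable D μ := (integrable_const (1:ℝ)).mono' hD.aestronglyMeasurable
    (Filter.Eventually.of_forall fun x => by simpa using hDb x)
  have hS1 : Integrable (fun ω => Y1 ω - mtilde1 (X ω)) μ := hY1.sub hmt1i
  have hS0 : Integrable (fun ω => Y0 ω - mtilde0 (X ω)) μ := hY0.sub hmt0i
  have hDS1 : Integrable (fun ω => D ω * (Y1 ω - mtilde1 (X ω))) μ := by
    simpa using hS1.bdd_mul hD.aestronglyMeasurable (c := 1) (ae_of_all _ fun x => hDb x)
  have h1Db : ∀ ω, |1 - D ω| ≤ 1 := fun ω => by rcases hD01 ω with h | h <;> simp [h]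
  have hDS0 : Integrable (fun ω => (1 - D ω) * (Y0 ω - mtilde0 (X ω))) μ := by
    simpa using hS0.bdd_mul (measurable_const.sub hD).aestronglyMeasurable
      (c := 1) (ae_of_all _ fun x => h1Db x)
  have hA_int : Integrable A μ := by
    simpa [hAdef] using hDS1.bdd_mul (hq1m.mono hm' le_rfl).aestronglyMeasurable
      (c := ε⁻¹) (ae_of_all _ fun x => hq1b x)
  have hB_int : Integrable B μ := by
    simpa [hBdef] using hDS0.bdd_mul (hq0m.mono hm' le_rfl).aestronglyMeasurable
      (c := ε⁻¹) (ae_of_all _ fun x => hq0b x)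
  have hDY1 : Integrable (fun ω => D ω * Y1 ω) μ := by
    simpa using hY1.bdd_mul hD.aestronglyMeasurable (c := 1) (ae_of_all _ fun x => hDb x)
  have hDY0 : Integrable (fun ω => D ω * Y0 ω) μ := by
    simpa using hY0.bdd_mul hD.aestronglyMeasurable (c := 1) (ae_of_all _ fun x => hDb x)
  have hDmt1 : Integrable (fun ω => mtilde1 (X ω) * D ω) μ := by
    have := hmt1i.bdd_mul hD.aestronglyMeasurable (c := 1) (ae_of_all _ fun x => hDb x)
    have heq : (fun ω => mtilde1 (X ω) * D ω) = fun ω => D ω * mtilde1 (X ω) := by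
      funext ω; ring
    rw [heq]; simpa using this
  have hDmt0 : Integrable (fun ω => mtilde0 (X ω) * D ω) μ := by
    have := hmt0i.bdd_mul hD.aestronglyMeasurable (c := 1) (ae_of_all _ fun x => hDb x)
    have heq : (fun ω => mtilde0 (X ω) * D ω) = fun ω => D ω * mtilde0 (X ω) := by
      funext ω; ring
    rw [heq]; simpa using this
  -- conditional independence of Y1,D and of Y0,D
  have hCI1 : CondIndepFun m' hm' Y1 D μ :=
    hUnconf.comp (measurable_fst : Measurable (Prod.fst : ℝ × ℝ → ℝ)) measurable_id
  have hCI0 : CondIndepFun m' hm' Y0 D μ :=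
    hUnconf.comp (measurable_snd : Measurable (Prod.snd : ℝ × ℝ → ℝ)) measurable_id
  -- key conditional expectations
  have hKey1 : μ[fun ω => D ω * Y1 ω | m'] =ᵐ[μ] fun ω => (μ[D|m']) ω * (μ[Y1|m']) ω :=
    condExp_mul_of_condIndepFun' hm' μ hY1m hD hY1 hDb hCI1
  have hKey0 : μ[fun ω => D ω * Y0 ω | m'] =ᵐ[μ] fun ω => (μ[D|m']) ω * (μ[Y0|m']) ω :=
    condExp_mul_of_condIndepFun' hm' μ hY0m hD hY0 hDb hCI0
  -- pull-out computations
  have hPull1 : μ[fun ω => mtilde1 (X ω) * D ω | m']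
      =ᵐ[μ] fun ω => mtilde1 (X ω) * (μ[D|m']) ω := by
    have := condExp_mul_of_stronglyMeasurable_left (μ := μ) (m := m')
      hmt1m'.stronglyMeasurable (by simpa [Pi.mul_def] using hDmt1) hDi
    simpa [Pi.mul_def] using this
  have hPull0 : μ[fun ω => mtilde0 (X ω) * D ω | m']
      =ᵐ[μ] fun ω => mtilde0 (X ω) * (μ[D|m']) ω := by
    have := condExp_mul_of_stronglyMeasurable_left (μ := μ) (m := m')
      hmt0m'.stronglyMeasurable (by simpa [Pi.mul_def] using hDmt0) hDi
    simpa [Pi.mul_def] using this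
  -- conditional expectation of A
  have hA_ce : μ[A|m'] =ᵐ[μ]
      fun ω => q1 ω * ((μ[D|m']) ω * (μ[Y1|m']) ω - mtilde1 (X ω) * (μ[D|m']) ω) := by
    have hpull : μ[A|m'] =ᵐ[μ]
        fun ω => q1 ω * (μ[fun ω => D ω * (Y1 ω - mtilde1 (X ω))|m']) ω := by
      have := condExp_mul_of_stronglyMeasurable_left (μ := μ) (m := m')
        hq1m.stronglyMeasurable (by simpa [hAdef, Pi.mul_def] using hA_int) hDS1
      simpa [hAdef, Pi.mul_def] using this
    have hsplit : μ[fun ω => D ω * (Y1 ω - mtilde1 (X ω))|m']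
        =ᵐ[μ] μ[fun ω => D ω * Y1 ω|m'] - μ[fun ω => mtilde1 (X ω) * D ω|m'] := by
      have heq : (fun ω => D ω * (Y1 ω - mtilde1 (X ω)))
          = fun ω => D ω * Y1 ω - mtilde1 (X ω) * D ω := by funext ω; ring
      rw [heq]
      exact condExp_sub hDY1 hDmt1 _
    filter_upwards [hpull, hsplit, hKey1, hPull1] with ω e1 e2 e3 e4
    rw [e1, e2, Pi.sub_apply, e3, e4]
  -- conditional expectation of B
  have hB_ce : μ[B|m'] =ᵐ[μ]
      fun ω => q0 ω * (((μ[Y0|m']) ω - mtilde0 (X ω))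
        - ((μ[D|m']) ω * (μ[Y0|m']) ω - mtilde0 (X ω) * (μ[D|m']) ω)) := by
    have hpull : μ[B|m'] =ᵐ[μ]
        fun ω => q0 ω * (μ[fun ω => (1 - D ω) * (Y0 ω - mtilde0 (X ω))|m']) ω := by
      have := condExp_mul_of_stronglyMeasurable_left (μ := μ) (m := m')
        hq0m.stronglyMeasurable (by simpa [hBdef, Pi.mul_def] using hB_int) hDS0
      simpa [hBdef, Pi.mul_def] using this
    have hsplit : μ[fun ω => (1 - D ω) * (Y0 ω - mtilde0 (X ω))|m']
        =ᵐ[μ] μ[fun ω => Y0 ω - mtilde0 (X ω)|m']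
          - μ[fun ω => D ω * Y0 ω - mtilde0 (X ω) * D ω|m'] := by
      have heq : (fun ω => (1 - D ω) * (Y0 ω - mtilde0 (X ω)))
          = fun ω => (Y0 ω - mtilde0 (X ω)) - (D ω * Y0 ω - mtilde0 (X ω) * D ω) := by
        funext ω; ring
      rw [heq]
      exact condExp_sub hS0 (hDY0.sub hDmt0) _
    have hsplit2 : μ[fun ω => D ω * Y0 ω - mtilde0 (X ω) * D ω|m']
        =ᵐ[μ] μ[fun ω => D ω * Y0 ω|m'] - μ[fun ω => mtilde0 (X ω) * D ω|m'] :=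
      condExp_sub hDY0 hDmt0 _
    have hsplit3 : μ[fun ω => Y0 ω - mtilde0 (X ω)|m']
        =ᵐ[μ] μ[Y0|m'] - μ[fun ω => mtilde0 (X ω)|m'] := condExp_sub hY0 hmt0i _
    have hid0 : μ[fun ω => mtilde0 (X ω)|m'] = fun ω => mtilde0 (X ω) :=
      condExp_of_stronglyMeasurable hm' hmt0m'.stronglyMeasurable hmt0i
    filter_upwards [hpull, hsplit, hsplit2, hsplit3, hKey0, hPull0]
      with ω e1 e2 e3 e4 e5 e6
    rw [e1, e2, Pi.sub_apply, e3, Pi.sub_apply, e4, Pi.sub_apply, hid0, e5, e6]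
  -- conditional expectation of the whole score
  have hid1 : μ[fun ω => mtilde1 (X ω)|m'] = fun ω => mtilde1 (X ω) :=
    condExp_of_stronglyMeasurable hm' hmt1m'.stronglyMeasurable hmt1i
  have hid0 : μ[fun ω => mtilde0 (X ω)|m'] = fun ω => mtilde0 (X ω) :=
    condExp_of_stronglyMeasurable hm' hmt0m'.stronglyMeasurable hmt0i
  have hAB : μ[fun ω => A ω - B ω|m'] =ᵐ[μ] μ[A|m'] - μ[B|m'] := condExp_sub hA_int hB_int _
  have hCC : μ[fun ω => mtilde1 (X ω) - mtilde0 (X ω)|m']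
      =ᵐ[μ] μ[fun ω => mtilde1 (X ω)|m'] - μ[fun ω => mtilde0 (X ω)|m'] :=
    condExp_sub hmt1i hmt0i _
  have hTop : μ[fun ω => (A ω - B ω) + (mtilde1 (X ω) - mtilde0 (X ω))|m']
      =ᵐ[μ] μ[fun ω => A ω - B ω|m'] + μ[fun ω => mtilde1 (X ω) - mtilde0 (X ω)|m'] :=
    condExp_add (hA_int.sub hB_int) (hmt1i.sub hmt0i) _
  -- combine
  have hMain : μ[fun ω => (A ω - B ω) + (mtilde1 (X ω) - mtilde0 (X ω))|m'] =ᵐ[μ]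
      fun ω => q1 ω * ((μ[D|m']) ω * (μ[Y1|m']) ω - mtilde1 (X ω) * (μ[D|m']) ω)
        - q0 ω * (((μ[Y0|m']) ω - mtilde0 (X ω))
          - ((μ[D|m']) ω * (μ[Y0|m']) ω - mtilde0 (X ω) * (μ[D|m']) ω))
        + (mtilde1 (X ω) - mtilde0 (X ω)) := by
    filter_upwards [hTop, hAB, hCC, hA_ce, hB_ce] with ω e1 e2 e3 e4 e5
    rw [e1, Pi.add_apply, e2, Pi.sub_apply, e3, Pi.sub_apply, hid1, hid0, e4, e5]
  refine hMain.trans ?_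
  rcases hcorrect with hcor | ⟨hcor1, hcor0⟩
  · -- propensity score correct
    have hagree : ∀ᵐ ω ∂μ, ptilde (X ω) = (μ[D|m']) ω := hcor.trans hpX
    filter_upwards [hagree] with ω e
    simp only [hq1def, hq0def, ← e]
    have h0 := hpt0 ω; have h1 := hpt1 ω
    field_simp
    ring
  · -- outcome regressions correct
    filter_upwards [hcor1, hcor0] with ω e1 e0
    rw [e1, e0]
    ring
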